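/- Let H be a nontrivial Puiseux monoid. Then the seminormal closure, root closure, and complete integral closure of H all coincide and equal q(H) ∩ Q≥0, where q(H) is the quotient group of H inside Q. Moreover, this common closure equals n · ⟨1/d : d ∈ d(H∖{0})⟩ where n = gcd of the set of numerators of elements of H and d(x) denotes the denominator of x in lowest terms. -/

import Mathlib

/-- Numerical-semigroup style combinatorial lemma. -/
theorem px_combo (A B m : ℕ) (hBA : B < A) (hm : A * B ≤ m) :
    ∃ α β : ℕ, α * A + β * B = m * (A - B) := by
  have hA : 0 < A := lt_of_le_of_lt (Nat.zero_le B) hBA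
  set k := m / A + 1 with hk
  have h1 : m < k * A := (Nat.div_lt_iff_lt_mul hA).mp (Nat.lt_succ_self _)
  have h3 : k * A ≤ m + A := by
    have := Nat.div_mul_le_self m A
    calc k * A = m / A * A + A := by ring
      _ ≤ m + A := by omega
  have h2 : k * B ≤ m := by
    rcases Nat.eq_zero_or_pos B with hB | hB
    · simp [hB]
    · have hmul : k * B * A ≤ m * A := by nlinarith
      exact Nat.le_of_mul_le_mul_right hmul hA
  refine ⟨m - k * B, k * A - m, ?_⟩
  zify [h2, le_of_lt h1, le_of_lt hBA]
  ring

/-- Elements of the group closure of a submonoid of ℚ are differences. -/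
theorem px_diff (H : AddSubmonoid ℚ) {x : ℚ}
    (hx : x ∈ AddSubgroup.closure (H : Set ℚ)) :
    ∃ a ∈ H, ∃ b ∈ H, x = a - b := by
  refine AddSubgroup.closure_induction ?_ ?_ ?_ ?_ hx
  · exact fun y hy => ⟨y, hy, 0, H.zero_mem, by simp⟩
  · exact ⟨0, H.zero_mem, 0, H.zero_mem, by simp⟩
  · rintro y z _ _ ⟨a, ha, b, hb, rfl⟩ ⟨c, hc, d, hd, rfl⟩
    exact ⟨a + c, H.add_mem ha hc, b + d, H.add_mem hb hd, by ring⟩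
  · rintro y _ ⟨a, ha, b, hb, rfl⟩
    exact ⟨b, hb, a, ha, by ring⟩

/-- num and den of `m * x` for `m` coprime to the denominator. -/
theorem px_mul_num_den (x : ℚ) (m : ℕ) (hcop : Nat.Coprime m x.den) :
    ((m : ℚ) * x).num = m * x.num ∧ ((m : ℚ) * x).den = x.den := by
  have hd : (0 : ℤ) < (x.den : ℤ) := by exact_mod_cast x.pos
  have hco : ((m : ℤ) * x.num).natAbs.Coprime ((x.den : ℤ)).natAbs := by
    rw [Int.natAbs_mul, Int.natAbs_natCast, Int.natAbs_natCast]
    exact Nat.Coprime.mul hcop x.reduced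
  have he : (m : ℚ) * x = (((m : ℤ) * x.num : ℤ) : ℚ) / (((x.den : ℤ)) : ℚ) := by
    conv_lhs => rw [← Rat.num_div_den x]
    push_cast
    ring
  constructor
  · rw [he]; exact Rat.num_div_eq_of_coprime hd hco
  · rw [he]
    have := Rat.den_div_eq_of_coprime hd hco
    exact_mod_cast this

/-- `(x.num : ℚ) = x * x.den`. -/
theorem px_num_eq (x : ℚ) : (x.num : ℚ) = x * x.den := by
  have hdne : (x.den : ℚ) ≠ 0 := by exact_mod_cast x.den_nz
  have h := Rat.num_div_den x
  rw [div_eq_iff hdne] at h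
  exact h

/-- n / den h lies in the quotient group. -/
theorem px_n_div_den (H : AddSubmonoid ℚ) (n : ℕ)
    (hn2 : ∀ m : ℤ, (∀ x ∈ H, x ≠ 0 → m ∣ x.num) → m ∣ (n : ℤ))
    {h : ℚ} (hh : h ∈ H) (hne : h ≠ 0) :
    (n : ℚ) / (h.den : ℚ) ∈ AddSubgroup.closure (H : Set ℚ) := by
  have hdne : (h.den : ℚ) ≠ 0 := by exact_mod_cast h.den_nz
  set G := AddSubgroup.closure (H : Set ℚ) with hG
  set φ : ℤ →+ ℚ := AddMonoidHom.mk' (fun z => (z : ℚ) / (h.den : ℚ))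
    (fun a b => by push_cast; ring) with hφ
  set J : AddSubgroup ℤ := G.comap φ with hJ
  obtain ⟨e, hJe⟩ := Int.subgroup_cyclic J
  have mem_iff : ∀ z : ℤ, z ∈ J ↔ e ∣ z := by
    intro z
    rw [hJe, AddSubgroup.mem_closure_singleton]
    constructor
    · rintro ⟨k, rfl⟩; exact ⟨k, by rw [zsmul_eq_mul, Int.cast_id, mul_comm]⟩
    · rintro ⟨k, rfl⟩; exact ⟨k, by rw [zsmul_eq_mul, Int.cast_id, mul_comm]⟩
  have hnum_mem : ∀ x : ℚ, x ∈ H → (x.num : ℚ) ∈ G := by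
    intro x hx
    have : (x.den : ℚ) * x ∈ G := by
      have hxG : x ∈ G := AddSubgroup.subset_closure hx
      simpa [nsmul_eq_mul] using AddSubgroup.nsmul_mem G hxG x.den
    rwa [mul_comm, ← px_num_eq] at this
  have hJnum : ∀ x : ℚ, x ∈ H → e ∣ x.num * h.den := by
    intro x hx
    rw [← mem_iff]
    show φ (x.num * h.den) ∈ G
    have : φ (x.num * h.den) = (x.num : ℚ) := by
      show ((x.num * h.den : ℤ) : ℚ) / (h.den : ℚ) = (x.num : ℚ)
      push_cast
      field_simp
    rw [this]
    exact hnum_mem x hx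
  have he_num : e ∣ h.num := by
    rw [← mem_iff]
    show φ h.num ∈ G
    have : φ h.num = h := by
      show ((h.num : ℤ) : ℚ) / (h.den : ℚ) = h
      exact Rat.num_div_den h
    rw [this]
    exact AddSubgroup.subset_closure hh
  have hcop : IsCoprime e (h.den : ℤ) := by
    rw [Int.isCoprime_iff_gcd_eq_one]
    have h1 : Int.gcd e (h.den : ℤ) ∣ Nat.gcd h.num.natAbs h.den := by
      refine Nat.dvd_gcd ?_ ?_
      · exact dvd_trans (Nat.gcd_dvd_left _ _)
          (Int.natAbs_dvd_natAbs.mpr he_num)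
      · simpa [Int.natAbs_natCast, Int.gcd_eq_natAbs_gcd_natAbs] using Nat.gcd_dvd_right e.natAbs (h.den : ℤ).natAbs
    rw [h.reduced] at h1
    exact Nat.eq_one_of_dvd_one h1
  have he_all : ∀ x ∈ H, x ≠ 0 → e ∣ x.num := by
    intro x hx _
    exact hcop.dvd_of_dvd_mul_right (hJnum x hx)
  have hen : e ∣ (n : ℤ) := hn2 e he_all
  have : (n : ℤ) ∈ J := (mem_iff _).mpr hen
  simpa [hJ, hφ] using this
/-- For a nontrivial Puiseux monoid H, the seminormal closure, root closure and
complete integral closure coincide, equal q(H) ∩ ℚ≥0, and equal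
n · ⟨1/d : d ∈ d(H∖{0})⟩ where n = gcd of the numerators of elements of H. -/
theorem puiseux_closures (H : AddSubmonoid ℚ) (hpos : ∀ x ∈ H, 0 ≤ x)
    (hnt : ∃ x ∈ H, x ≠ 0) (n : ℕ)
    (hn1 : ∀ x ∈ H, x ≠ 0 → (n : ℤ) ∣ x.num)
    (hn2 : ∀ m : ℤ, (∀ x ∈ H, x ≠ 0 → m ∣ x.num) → m ∣ (n : ℤ)) :
    let Q : Set ℚ := (AddSubgroup.closure (H : Set ℚ) : Set ℚ)
    let semin : Set ℚ := {x ∈ Q | ∃ N : ℕ, ∀ m : ℕ, N ≤ m → (m : ℚ) * x ∈ H}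
    let root : Set ℚ := {x ∈ Q | ∃ N : ℕ, 0 < N ∧ (N : ℚ) * x ∈ H}
    let cic : Set ℚ := {x ∈ Q | ∃ c ∈ H, ∀ m : ℕ, c + (m : ℚ) * x ∈ H}
    semin = root ∧ root = cic ∧ cic = {x ∈ Q | 0 ≤ x} ∧
      cic = (fun y : ℚ => (n : ℚ) * y) ''
        (AddSubmonoid.closure {q : ℚ | ∃ x ∈ H, x ≠ 0 ∧ q = 1 / (x.den : ℚ)} : Set ℚ) := by
  intro Q semin root cic
  set T : Set ℚ := {x ∈ Q | 0 ≤ x} with hT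
  set M : AddSubmonoid ℚ :=
    AddSubmonoid.closure {q : ℚ | ∃ x ∈ H, x ≠ 0 ∧ q = 1 / (x.den : ℚ)} with hM
  -- basic inclusions
  have h1 : semin ⊆ root := by
    rintro x ⟨hxQ, N, hN⟩
    exact ⟨hxQ, N + 1, Nat.succ_pos _, hN (N + 1) (Nat.le_succ _)⟩
  have h2 : root ⊆ T := by
    rintro x ⟨hxQ, N, hNpos, hNx⟩
    refine ⟨hxQ, ?_⟩
    have hNq : (0 : ℚ) < (N : ℚ) := by exact_mod_cast hNpos
    have := hpos _ hNx
    nlinarith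
  have h3 : cic ⊆ T := by
    rintro x ⟨hxQ, c, hc, hcm⟩
    refine ⟨hxQ, ?_⟩
    by_contra hneg
    push_neg at hneg
    obtain ⟨m, hm⟩ := exists_nat_gt (c / (-x))
    have hx' : (0 : ℚ) < -x := by linarith
    have hcm' : c < (m : ℚ) * (-x) := (div_lt_iff₀ hx').mp hm
    have h0 : (0 : ℚ) ≤ c + (m : ℚ) * x := hpos _ (hcm m)
    linarith
  have h4 : T ⊆ semin := by
    rintro x ⟨hxQ, hx0⟩
    refine ⟨hxQ, ?_⟩
    obtain ⟨a, ha, b, hb, hab⟩ := px_diff H hxQ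
    rcases eq_or_lt_of_le hx0 with hx | hx
    · exact ⟨0, fun m _ => by rw [← hx, mul_zero]; exact H.zero_mem⟩
    · have ha0 : 0 ≤ a := hpos a ha
      have hb0 : 0 ≤ b := hpos b hb
      have hanum : 0 ≤ a.num := Rat.num_nonneg.mpr ha0
      have hbnum : 0 ≤ b.num := Rat.num_nonneg.mpr hb0
      set A : ℕ := a.num.toNat * b.den with hA
      set B : ℕ := b.num.toNat * a.den with hB
      set d : ℕ := a.den * b.den with hd
      have hdq : (0 : ℚ) < (d : ℚ) := by
        have := a.pos; have := b.pos
        exact_mod_cast Nat.mul_pos a.pos b.pos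
      have eA : (A : ℚ) = a * (d : ℚ) := by
        have h1 : ((a.num.toNat : ℕ) : ℚ) = (a.num : ℚ) := by
          exact_mod_cast Int.toNat_of_nonneg hanum
        push_cast [hA, hd]
        rw [h1, px_num_eq a]
        ring
      have eB : (B : ℚ) = b * (d : ℚ) := by
        have h1 : ((b.num.toNat : ℕ) : ℚ) = (b.num : ℚ) := by
          exact_mod_cast Int.toNat_of_nonneg hbnum
        push_cast [hB, hd]
        rw [h1, px_num_eq b]
        ring
      have hBA : B < A := by
        have hq : (B : ℚ) < (A : ℚ) := by
          rw [eA, eB]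
          have : b < a := by
            have : 0 < a - b := by rw [← hab]; exact hx
            linarith
          exact mul_lt_mul_of_pos_right this hdq
        exact_mod_cast hq
      refine ⟨A * B, fun m hm => ?_⟩
      obtain ⟨α, β, hcombo⟩ := px_combo A B m hBA hm
      have hc : ((α * A + β * B : ℕ) : ℚ) = ((m * (A - B) : ℕ) : ℚ) := by
        rw [hcombo]
      push_cast [le_of_lt hBA] at hc
      rw [eA, eB] at hc
      have key : (α : ℚ) * a + (β : ℚ) * b = (m : ℚ) * (a - b) := by
        apply mul_right_cancel₀ hdq.ne'
        calc ((α : ℚ) * a + (β : ℚ) * b) * (d : ℚ)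
            = (α : ℚ) * (a * d) + (β : ℚ) * (b * d) := by ring
          _ = (m : ℚ) * (a * d - b * d) := hc
          _ = ((m : ℚ) * (a - b)) * d := by ring
      rw [hab, ← key]
      refine H.add_mem ?_ ?_
      · simpa [nsmul_eq_mul] using H.nsmul_mem ha α
      · simpa [nsmul_eq_mul] using H.nsmul_mem hb β
  have h5 : semin ⊆ cic := by
    rintro x ⟨hxQ, N, hN⟩
    refine ⟨hxQ, (N : ℚ) * x, hN N le_rfl, fun m => ?_⟩
    have := hN (N + m) (Nat.le_add_right _ _)
    have e : (N : ℚ) * x + (m : ℚ) * x = ((N + m : ℕ) : ℚ) * x := by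
      push_cast; ring
    rw [e]; exact this
  -- n is positive
  have hnpos : 0 < n := by
    obtain ⟨x₀, hx₀, hx₀ne⟩ := hnt
    rcases Nat.eq_zero_or_pos n with h | h
    · exfalso
      have := hn1 x₀ hx₀ hx₀ne
      rw [h] at this
      simp only [Nat.cast_zero, zero_dvd_iff] at this
      exact hx₀ne (Rat.num_eq_zero.mp this)
    · exact h
  -- S ⊆ T
  have hS1 : (fun y : ℚ => (n : ℚ) * y) '' (M : Set ℚ) ⊆ T := by
    rintro _ ⟨y, hy, rfl⟩
    have key : 0 ≤ y ∧ (n : ℚ) * y ∈ AddSubgroup.closure (H : Set ℚ) := by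
      refine AddSubmonoid.closure_induction ?_ ?_ ?_ hy
      · rintro z ⟨h, hh, hne, rfl⟩
        constructor
        · positivity
        · rw [mul_one_div]
          exact px_n_div_den H n hn2 hh hne
      · exact ⟨le_refl 0, by rw [mul_zero]; exact AddSubgroup.zero_mem _⟩
      · rintro y z _ _ ⟨hy0, hyG⟩ ⟨hz0, hzG⟩
        exact ⟨by linarith, by rw [mul_add]; exact AddSubgroup.add_mem _ hyG hzG⟩
    exact ⟨key.2, mul_nonneg (by positivity) key.1⟩
  -- T ⊆ S
  have hS2 : T ⊆ (fun y : ℚ => (n : ℚ) * y) '' (M : Set ℚ) := by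
    intro x hxT
    obtain ⟨hxQ, N₀, hsem⟩ := h4 hxT
    rcases eq_or_lt_of_le hxT.2 with hx | hx
    · exact ⟨0, M.zero_mem, by simp [← hx]⟩
    · set D : ℕ := x.den with hD
      have hDpos : 0 < D := x.pos
      set m₁ : ℕ := 1 + D * N₀ with hm₁
      set m₂ : ℕ := 1 + D * (N₀ + 1) with hm₂
      have hcop₁ : Nat.Coprime m₁ D :=
        (Nat.coprime_add_mul_left_left 1 D N₀).mpr (Nat.coprime_one_left D)
      have hcop₂ : Nat.Coprime m₂ D :=
        (Nat.coprime_add_mul_left_left 1 D (N₀ + 1)).mpr (Nat.coprime_one_left D)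
      have hDN : N₀ ≤ D * N₀ := Nat.le_mul_of_pos_left N₀ hDpos
      have hDe : D * (N₀ + 1) = D * N₀ + D := by ring
      have hm₁N : N₀ ≤ m₁ := by omega
      have hm₂N : N₀ ≤ m₂ := by omega
      have hm₁pos : 0 < m₁ := by omega
      have hm₂pos : 0 < m₂ := by omega
      have hh₁ : (m₁ : ℚ) * x ∈ H := hsem m₁ hm₁N
      have hh₂ : (m₂ : ℚ) * x ∈ H := hsem m₂ hm₂N
      have hnd₁ := px_mul_num_den x m₁ hcop₁
      have hnd₂ := px_mul_num_den x m₂ hcop₂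
      have hne₁ : (m₁ : ℚ) * x ≠ 0 := by
        have : (0 : ℚ) < (m₁ : ℚ) * x := by
          have : (0 : ℚ) < (m₁ : ℚ) := by exact_mod_cast hm₁pos
          nlinarith
        exact this.ne'
      have hne₂ : (m₂ : ℚ) * x ≠ 0 := by
        have : (0 : ℚ) < (m₂ : ℚ) * x := by
          have : (0 : ℚ) < (m₂ : ℚ) := by exact_mod_cast hm₂pos
          nlinarith
        exact this.ne'
      have hd₁ : (n : ℤ) ∣ (m₁ : ℤ) * x.num := by
        have := hn1 _ hh₁ hne₁; rwa [hnd₁.1] at this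
      have hd₂ : (n : ℤ) ∣ (m₂ : ℤ) * x.num := by
        have := hn1 _ hh₂ hne₂; rwa [hnd₂.1] at this
      have hdD : (n : ℤ) ∣ (D : ℤ) * x.num := by
        have : (D : ℤ) * x.num = (m₂ : ℤ) * x.num - (m₁ : ℤ) * x.num := by
          have : (m₂ : ℤ) = (m₁ : ℤ) + (D : ℤ) := by
            rw [hm₁, hm₂]; push_cast; ring
          rw [this]; ring
        rw [this]
        exact dvd_sub hd₂ hd₁
      have hcopnD : IsCoprime (n : ℤ) ((D : ℕ) : ℤ) := by
        rw [Int.isCoprime_iff_gcd_eq_one]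
        have hred := ((m₁ : ℚ) * x).reduced
        rw [hnd₁.2] at hred
        have h1 : Int.gcd (n : ℤ) (D : ℤ) ∣ Nat.gcd ((m₁ : ℚ) * x).num.natAbs D := by
          refine Nat.dvd_gcd ?_ ?_
          · refine dvd_trans (Nat.gcd_dvd_left _ _) ?_
            have : (n : ℤ) ∣ ((m₁ : ℚ) * x).num := hn1 _ hh₁ hne₁
            simpa [Int.natAbs_natCast] using Int.natAbs_dvd_natAbs.mpr this
          · simpa [Int.natAbs_natCast, Int.gcd_eq_natAbs_gcd_natAbs] using Nat.gcd_dvd_right (n : ℤ).natAbs ((D : ℤ)).natAbs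
        rw [hred] at h1
        exact Nat.eq_one_of_dvd_one h1
      have hdvd : (n : ℤ) ∣ x.num := hcopnD.dvd_of_dvd_mul_left hdD
      have hxnum : 0 < x.num := Rat.num_pos.mpr hx
      have hdvdN : n ∣ x.num.toNat := by
        have : ((n : ℕ) : ℤ) ∣ ((x.num.toNat : ℕ) : ℤ) := by
          rwa [Int.toNat_of_nonneg hxnum.le]
        exact_mod_cast this
      have hgen : (1 : ℚ) / (D : ℚ) ∈ M := by
        apply AddSubmonoid.subset_closure
        exact ⟨(m₁ : ℚ) * x, hh₁, hne₁, by rw [hnd₁.2]⟩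
      refine ⟨(x.num.toNat / n) • ((1 : ℚ) / (D : ℚ)), M.nsmul_mem hgen _, ?_⟩
      show (n : ℚ) * ((x.num.toNat / n : ℕ) • ((1 : ℚ) / (D : ℚ))) = x
      rw [nsmul_eq_mul]
      have hDne : ((D : ℕ) : ℚ) ≠ 0 := by
        exact_mod_cast hDpos.ne'
      have hnum_cast : (((x.num.toNat / n : ℕ)) : ℚ) * n = (x.num : ℚ) := by
        have : (x.num.toNat / n) * n = x.num.toNat := Nat.div_mul_cancel hdvdN
        have h2 : (((x.num.toNat / n) * n : ℕ) : ℚ) = ((x.num.toNat : ℕ) : ℚ) := by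
          rw [this]
        push_cast at h2
        have h3 : ((x.num.toNat : ℕ) : ℚ) = (x.num : ℚ) := by
          exact_mod_cast Int.toNat_of_nonneg hxnum.le
        rw [h3] at h2
        exact h2
      calc (n : ℚ) * ((x.num.toNat / n : ℕ) * ((1 : ℚ) / (D : ℚ)))
          = ((((x.num.toNat / n : ℕ)) : ℚ) * n) * (1 / (D : ℚ)) := by ring
        _ = (x.num : ℚ) * (1 / (D : ℚ)) := by rw [hnum_cast]
        _ = (x.num : ℚ) / (x.den : ℚ) := by rw [hD]; ring
        _ = x := Rat.num_div_den x
  refine ⟨Set.Subset.antisymm h1 (fun x hx => h4 (h2 hx)), ?_, ?_, ?_⟩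
  · exact Set.Subset.antisymm (fun x hx => h5 (h4 (h2 hx)))
      (fun x hx => h1 (h4 (h3 hx)))
  · exact Set.Subset.antisymm h3 (fun x hx => h5 (h4 hx))
  · exact Set.Subset.antisymm (fun x hx => hS2 (h3 hx))
      (fun x hx => h5 (h4 (hS1 hx)))
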